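/- Let p be a prime, R the ring of integers of a finite ramified extension of ℚ_p with prime element t, G = ⟨a | a^p = 1⟩, 1 ≤ j < d, 1 ≤ s < n as above. Let Z_{js} ⊆ RG ⊕ RG be the set of pairs (x,y) with t^j(a-1)x + (a-1)^{s+1}y = 0. Then Z_{js} is generated as an RG-module by u₁ = (0, ω), u₂ = ((a-1)^s, -t^j), and u₃ = (t^{-j}(ω - (a-1)^{p-1}), (a-1)^{p-s-1}), where ω = Φ_p(a) = 1 + a + ⋯ + a^{p-1}. -/

import Mathlib

set_option maxHeartbeats 1000000
set_option synthInstance.maxHeartbeats 1000000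
set_option linter.unusedVariables false

open Polynomial

namespace Stmt14Aux

set_option linter.unusedSectionVars false
variable {p : ℕ} [Fact p.Prime] {R : Type*} [CommRing R] [IsDomain R]

lemma aux_pow (m : ℕ) :
    (MonoidAlgebra.of R (Multiplicative (ZMod p)) (Multiplicative.ofAdd 1)) ^ m =
      MonoidAlgebra.of R (Multiplicative (ZMod p)) (Multiplicative.ofAdd (m : ZMod p)) := by
  rw [← map_pow]
  congr 1
  rw [← ofAdd_nsmul]
  simp [nsmul_eq_mul]

lemma aux_a_pow_p (a : MonoidAlgebra R (Multiplicative (ZMod p)))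
    (ha : a = MonoidAlgebra.of R (Multiplicative (ZMod p)) (Multiplicative.ofAdd 1)) :
    a ^ p = 1 := by
  subst ha
  rw [aux_pow]
  simp [MonoidAlgebra.one_def]

end Stmt14Aux
namespace Stmt14Aux
set_option linter.unusedSectionVars false
variable {p : ℕ} [Fact p.Prime] {R : Type*} [CommRing R] [IsDomain R]

lemma aux_inj (a : MonoidAlgebra R (Multiplicative (ZMod p)))
    (ha : a = MonoidAlgebra.of R (Multiplicative (ZMod p)) (Multiplicative.ofAdd 1))
    (f : Polynomial R) (hdeg : f.degree < (p : ℕ)) (h0 : Polynomial.aeval a f = 0) :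
    f = 0 := by
  by_cases hf : f = 0
  · exact hf
  have hnd : f.natDegree < p := (Polynomial.natDegree_lt_iff_degree_lt hf).mpr (by simpa using hdeg)
  have hrep : Polynomial.aeval a f = ∑ i ∈ Finset.range p,
      MonoidAlgebra.single (Multiplicative.ofAdd ((i : ZMod p))) (f.coeff i) := by
    rw [Polynomial.aeval_eq_sum_range' hnd]
    refine Finset.sum_congr rfl fun i _ => ?_
    rw [ha, aux_pow, MonoidAlgebra.of_apply, MonoidAlgebra.smul_single', mul_one]
  rw [hrep] at h0
  apply Polynomial.ext
  intro m
  simp only [Polynomial.coeff_zero]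
  by_cases hm : m < p
  · have h2 := Finsupp.ext_iff.mp (congrArg MonoidAlgebra.coeff h0) (Multiplicative.ofAdd ((m : ZMod p)))
    rw [MonoidAlgebra.coeff_sum, Finsupp.finset_sum_apply] at h2
    rw [Finset.sum_eq_single m] at h2
    · simpa using h2
    · intro i hi hne
      have hi' : i < p := Finset.mem_range.mp hi
      rw [MonoidAlgebra.coeff_single, Finsupp.single_apply]
      have hcc : ¬ (Multiplicative.ofAdd ((i : ZMod p)) = Multiplicative.ofAdd ((m : ZMod p))) := by
        intro hc
        apply hne
        have hc' : ((i : ZMod p)) = ((m : ZMod p)) := by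
          have := congrArg Multiplicative.toAdd hc
          simpa using this
        have := congrArg ZMod.val hc'
        rwa [ZMod.val_cast_of_lt hi', ZMod.val_cast_of_lt hm] at this
      rw [if_neg hcc]
    · intro hm'
      exact absurd (Finset.mem_range.mpr hm) hm'
  · exact Polynomial.coeff_eq_zero_of_natDegree_lt (hnd.trans_le (Nat.le_of_not_lt hm))

lemma aux_ker (a : MonoidAlgebra R (Multiplicative (ZMod p)))
    (ha : a = MonoidAlgebra.of R (Multiplicative (ZMod p)) (Multiplicative.ofAdd 1))
    (f : Polynomial R) (h0 : Polynomial.aeval a f = 0) :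
    ((Polynomial.X : Polynomial R) ^ p - 1) ∣ f := by
  have hp0 : p ≠ 0 := (Fact.out : p.Prime).ne_zero
  have hmonic : ((Polynomial.X : Polynomial R) ^ p - 1).Monic := by
    simpa using Polynomial.monic_X_pow_sub_C (1 : R) hp0
  have hdd : (f %ₘ ((Polynomial.X : Polynomial R) ^ p - 1)).degree < (p : ℕ) := by
    have h := Polynomial.degree_modByMonic_lt f hmonic
    have : ((Polynomial.X : Polynomial R) ^ p - 1).degree = (p : ℕ) := by
      have := Polynomial.degree_X_pow_sub_C (Nat.pos_of_ne_zero hp0) (1 : R)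
      simpa using this
    rwa [this] at h
  have h1 := Polynomial.modByMonic_add_div f ((Polynomial.X : Polynomial R) ^ p - 1)
  have h2 : Polynomial.aeval a (f %ₘ ((Polynomial.X : Polynomial R) ^ p - 1)) = 0 := by
    have hXp : Polynomial.aeval a ((Polynomial.X : Polynomial R) ^ p - 1) = 0 := by
      simp [aux_a_pow_p a ha]
    have := congrArg (Polynomial.aeval a) h1
    rw [map_add, map_mul, hXp, zero_mul, add_zero, h0] at this
    exact this
  have hzero := aux_inj a ha _ hdd h2
  exact ⟨f /ₘ ((Polynomial.X : Polynomial R) ^ p - 1), by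
    conv_lhs => rw [← h1]
    rw [hzero, zero_add]⟩

lemma aux_surj (a : MonoidAlgebra R (Multiplicative (ZMod p)))
    (ha : a = MonoidAlgebra.of R (Multiplicative (ZMod p)) (Multiplicative.ofAdd 1))
    (u : MonoidAlgebra R (Multiplicative (ZMod p))) :
    ∃ f : Polynomial R, Polynomial.aeval a f = u := by
  haveI : NeZero p := ⟨(Fact.out : p.Prime).ne_zero⟩
  refine ⟨∑ g ∈ u.coeff.support, Polynomial.C (u.coeff g) * Polynomial.X ^ (Multiplicative.toAdd g).val, ?_⟩
  rw [map_sum]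
  have key : ∀ g ∈ u.coeff.support,
      Polynomial.aeval a (Polynomial.C (u.coeff g) * Polynomial.X ^ (Multiplicative.toAdd g).val) =
        MonoidAlgebra.single g (u.coeff g) := by
    intro g _
    rw [map_mul, Polynomial.aeval_C, map_pow, Polynomial.aeval_X, ha, aux_pow]
    have hval : (((Multiplicative.toAdd g).val : ℕ) : ZMod p) = Multiplicative.toAdd g :=
      ZMod.natCast_rightInverse (Multiplicative.toAdd g)
    rw [hval, ofAdd_toAdd]
    have halg : algebraMap R (MonoidAlgebra R (Multiplicative (ZMod p))) (u.coeff g) =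
        MonoidAlgebra.single 1 (u.coeff g) := by
      rw [MonoidAlgebra.coe_algebraMap]; rfl
    rw [halg, MonoidAlgebra.of_apply, MonoidAlgebra.single_mul_single, one_mul, mul_one]
  rw [Finset.sum_congr rfl key]
  exact MonoidAlgebra.sum_coeff_single u

end Stmt14Aux
namespace Stmt14Aux
set_option linter.unusedSectionVars false
variable {p : ℕ} [Fact p.Prime] {R : Type*} [CommRing R] [IsDomain R]

lemma aux_omega (a : MonoidAlgebra R (Multiplicative (ZMod p)))
    (ha : a = MonoidAlgebra.of R (Multiplicative (ZMod p)) (Multiplicative.ofAdd 1))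
    (ω : MonoidAlgebra R (Multiplicative (ZMod p)))
    (hω : ω = ∑ g : Multiplicative (ZMod p), MonoidAlgebra.of R (Multiplicative (ZMod p)) g) :
    Polynomial.aeval a (∑ i ∈ Finset.range p, (Polynomial.X : Polynomial R) ^ i) = ω := by
  haveI : NeZero p := ⟨(Fact.out : p.Prime).ne_zero⟩
  rw [map_sum, hω]
  have h1 : ∀ i ∈ Finset.range p, Polynomial.aeval a ((Polynomial.X : Polynomial R) ^ i) =
      MonoidAlgebra.of R (Multiplicative (ZMod p)) (Multiplicative.ofAdd ((i : ZMod p))) := by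
    intro i _
    rw [map_pow, Polynomial.aeval_X, ha, aux_pow]
  rw [Finset.sum_congr rfl h1]
  have himg : Finset.image (fun i : ℕ => Multiplicative.ofAdd ((i : ZMod p))) (Finset.range p) =
      Finset.univ := by
    apply Finset.eq_univ_iff_forall.mpr
    intro g
    rw [Finset.mem_image]
    exact ⟨(Multiplicative.toAdd g).val, Finset.mem_range.mpr (ZMod.val_lt _), by
      rw [ZMod.natCast_rightInverse (Multiplicative.toAdd g), ofAdd_toAdd]⟩
  rw [← himg, Finset.sum_image]
  intro i hi m hm hc
  have hc' : ((i : ZMod p)) = ((m : ZMod p)) := by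
    have := congrArg Multiplicative.toAdd hc
    simpa using this
  have := congrArg ZMod.val hc'
  rwa [ZMod.val_cast_of_lt (Finset.mem_range.mp hi),
    ZMod.val_cast_of_lt (Finset.mem_range.mp hm)] at this

lemma aux_cancel (c : R) (hc : c ≠ 0) {u v : MonoidAlgebra R (Multiplicative (ZMod p))}
    (h : algebraMap R (MonoidAlgebra R (Multiplicative (ZMod p))) c * u =
      algebraMap R (MonoidAlgebra R (Multiplicative (ZMod p))) c * v) : u = v := by
  have halg : algebraMap R (MonoidAlgebra R (Multiplicative (ZMod p))) c =
      MonoidAlgebra.single 1 c := by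
    have := MonoidAlgebra.coe_algebraMap (R := R) (A := R) (M := Multiplicative (ZMod p))
    rw [show algebraMap R (MonoidAlgebra R (Multiplicative (ZMod p))) c =
      (algebraMap R (MonoidAlgebra R (Multiplicative (ZMod p)))) c from rfl]
    rw [this]
    simp
  rw [halg] at h
  ext x
  have hx := Finsupp.ext_iff.mp (congrArg MonoidAlgebra.coeff h) x
  rw [MonoidAlgebra.coeff_single_one_mul, MonoidAlgebra.coeff_single_one_mul] at hx
  exact mul_left_cancel₀ hc hx

lemma aux_pdvd : (Polynomial.C (p : R)) ∣
    ((Polynomial.X : Polynomial R) ^ p - 1 - (Polynomial.X - 1) ^ p) := by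
  have hz : (Polynomial.C (p : ℤ)) ∣
      ((Polynomial.X : Polynomial ℤ) ^ p - 1 - (Polynomial.X - 1) ^ p) := by
    rw [Polynomial.C_dvd_iff_dvd_coeff]
    intro i
    rw [← ZMod.intCast_zmod_eq_zero_iff_dvd]
    have hmap : (((Polynomial.X : Polynomial ℤ) ^ p - 1 - (Polynomial.X - 1) ^ p).map
        (Int.castRingHom (ZMod p))) = 0 := by
      rw [Polynomial.map_sub, Polynomial.map_sub, Polynomial.map_pow, Polynomial.map_pow,
        Polynomial.map_one, Polynomial.map_sub, Polynomial.map_one, Polynomial.map_X]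
      rw [sub_pow_char]
      simp
    have : ((((Polynomial.X : Polynomial ℤ) ^ p - 1 - (Polynomial.X - 1) ^ p).coeff i : ℤ) :
        ZMod p) = (((Polynomial.X : Polynomial ℤ) ^ p - 1 - (Polynomial.X - 1) ^ p).map
        (Int.castRingHom (ZMod p))).coeff i := by
      rw [Polynomial.coeff_map]
      rfl
    rw [this, hmap]
    simp
  obtain ⟨H, hH⟩ := hz
  refine ⟨H.map (Int.castRingHom R), ?_⟩
  have := congrArg (Polynomial.map (Int.castRingHom R)) hH
  rw [Polynomial.map_mul, Polynomial.map_sub, Polynomial.map_sub, Polynomial.map_pow,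
    Polynomial.map_pow, Polynomial.map_one, Polynomial.map_sub, Polynomial.map_one,
    Polynomial.map_X, Polynomial.map_C] at this
  rw [this]
  norm_num

end Stmt14Aux
namespace Stmt14Aux
set_option linter.unusedSectionVars false
variable {p : ℕ} [Fact p.Prime] {R : Type*} [CommRing R] [IsDomain R]

/-- If `(a-1) * v = 0` then `v = ω * c` for some `c`. -/
lemma aux_ann (a : MonoidAlgebra R (Multiplicative (ZMod p)))
    (ha : a = MonoidAlgebra.of R (Multiplicative (ZMod p)) (Multiplicative.ofAdd 1))
    (ω : MonoidAlgebra R (Multiplicative (ZMod p)))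
    (hω : ω = ∑ g : Multiplicative (ZMod p), MonoidAlgebra.of R (Multiplicative (ZMod p)) g)
    (v : MonoidAlgebra R (Multiplicative (ZMod p))) (h : (a - 1) * v = 0) :
    ∃ c, v = ω * c := by
  obtain ⟨f, hf⟩ := aux_surj a ha v
  have h0 : Polynomial.aeval a ((Polynomial.X - 1) * f) = 0 := by
    rw [map_mul, map_sub, Polynomial.aeval_X, map_one, hf, h]
  obtain ⟨Q, hQ⟩ := aux_ker a ha _ h0
  have hgeom : ((Polynomial.X : Polynomial R) ^ p - 1) =
      (∑ i ∈ Finset.range p, (Polynomial.X : Polynomial R) ^ i) * (Polynomial.X - 1) :=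
    (geom_sum_mul (Polynomial.X : Polynomial R) p).symm
  rw [hgeom] at hQ
  have hcancel : f = (∑ i ∈ Finset.range p, (Polynomial.X : Polynomial R) ^ i) * Q := by
    have hX1 : (Polynomial.X - 1 : Polynomial R) ≠ 0 := by
      simpa using Polynomial.X_sub_C_ne_zero (1 : R)
    apply mul_left_cancel₀ hX1
    rw [hQ]
    ring
  refine ⟨Polynomial.aeval a Q, ?_⟩
  rw [← hf, hcancel, map_mul, aux_omega a ha ω hω]

/-- If `(a-1)^s * v = T₀ * w` with `T₀ ∣ p` in `R`, then `v = (a-1)^(p-s) * q + T₀ * r`. -/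
lemma aux_key (a : MonoidAlgebra R (Multiplicative (ZMod p)))
    (ha : a = MonoidAlgebra.of R (Multiplicative (ZMod p)) (Multiplicative.ofAdd 1))
    (T0 : R) (hT0 : T0 ∣ (p : R)) (s : ℕ) (hs : s ≤ p)
    (v w : MonoidAlgebra R (Multiplicative (ZMod p)))
    (h : (a - 1) ^ s * v = algebraMap R (MonoidAlgebra R (Multiplicative (ZMod p))) T0 * w) :
    ∃ q r, v = (a - 1) ^ (p - s) * q +
      algebraMap R (MonoidAlgebra R (Multiplicative (ZMod p))) T0 * r := by
  obtain ⟨f, hf⟩ := aux_surj a ha v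
  obtain ⟨g', hg'⟩ := aux_surj a ha w
  have h0 : Polynomial.aeval a ((Polynomial.X - 1) ^ s * f - Polynomial.C T0 * g') = 0 := by
    rw [map_sub, map_mul, map_mul, map_pow, map_sub, Polynomial.aeval_X, map_one,
      Polynomial.aeval_C, hf, hg', h, sub_self]
  obtain ⟨Q, hQ⟩ := aux_ker a ha _ h0
  obtain ⟨h₁, hh₁⟩ := aux_pdvd (p := p) (R := R)
  obtain ⟨e, he⟩ := hT0
  -- (X-1)^s * (f - (X-1)^(p-s) * Q) = C T0 * (g' + C e * h₁ * Q)
  have hps : (Polynomial.X - 1 : Polynomial R) ^ s * (Polynomial.X - 1) ^ (p - s) =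
      (Polynomial.X - 1) ^ p := by
    rw [← pow_add]
    congr 1
    omega
  have heq : (Polynomial.X - 1 : Polynomial R) ^ s *
      (f - (Polynomial.X - 1) ^ (p - s) * Q) =
      Polynomial.C T0 * (g' + Polynomial.C e * h₁ * Q) := by
    have hCp : (Polynomial.C ((p : R)) : Polynomial R) = Polynomial.C T0 * Polynomial.C e := by
      rw [← map_mul, ← he]
    have hxp : ((Polynomial.X : Polynomial R) ^ p - 1) =
        (Polynomial.X - 1) ^ p + Polynomial.C T0 * Polynomial.C e * h₁ := by
      rw [← hCp]
      linear_combination hh₁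
    linear_combination hQ + Q * hxp - Q * hps
  -- pass to the quotient by (T0) to cancel the monic factor
  have hdvd2 : Polynomial.C T0 ∣ (f - (Polynomial.X - 1) ^ (p - s) * Q) := by
    rw [Polynomial.C_dvd_iff_dvd_coeff]
    intro i
    set I := Ideal.span {T0}
    have hmap0 : (f - (Polynomial.X - 1) ^ (p - s) * Q).map (Ideal.Quotient.mk I) = 0 := by
      have hmap := congrArg (Polynomial.map (Ideal.Quotient.mk I)) heq
      rw [Polynomial.map_mul, Polynomial.map_mul, Polynomial.map_pow, Polynomial.map_sub,
        Polynomial.map_one, Polynomial.map_X, Polynomial.map_C] at hmap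
      have hT0z : Ideal.Quotient.mk I T0 = 0 :=
        Ideal.Quotient.eq_zero_iff_mem.mpr (Ideal.mem_span_singleton_self T0)
      rw [hT0z, Polynomial.C_0, zero_mul] at hmap
      have hmonic : ((Polynomial.X - 1 : Polynomial (R ⧸ I)) ^ s).Monic := by
        apply Polynomial.Monic.pow
        simpa using Polynomial.monic_X_sub_C (1 : R ⧸ I)
      exact (Polynomial.Monic.mul_right_eq_zero_iff hmonic).mp hmap
    have hci := Polynomial.ext_iff.mp hmap0 i
    rw [Polynomial.coeff_map, Polynomial.coeff_zero] at hci
    have := Ideal.Quotient.eq_zero_iff_mem.mp hci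
    exact Ideal.mem_span_singleton.mp this
  obtain ⟨r₀, hr₀⟩ := hdvd2
  refine ⟨Polynomial.aeval a Q, Polynomial.aeval a r₀, ?_⟩
  have := congrArg (Polynomial.aeval a) hr₀
  rw [map_sub, map_mul, map_mul, map_pow, map_sub, Polynomial.aeval_X, map_one,
    Polynomial.aeval_C, hf] at this
  linear_combination this

end Stmt14Aux


open Stmt14Aux in
/-- With `R` the ring of integers of a finite ramified extension
of `ℚ_p` (prime element `t`), `G = ⟨a | a^p = 1⟩`, `1 ≤ j < d`, `1 ≤ s < n`,
the kernel `Z_{js} ⊆ RG ⊕ RG` of `(x,y) ↦ t^j(a-1)x + (a-1)^{s+1}y` is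
generated as an `RG`-module by `u₁ = (0, ω)`, `u₂ = ((a-1)^s, -t^j)` and
`u₃ = (t^{-j}(ω - (a-1)^{p-1}), (a-1)^{p-s-1})`, where `ω = Φ_p(a) = ∑ a^k`. -/
theorem stmt_14 (p : ℕ) [Fact p.Prime]
    (T : Type*) [Field T] [Algebra ℚ_[p] T] [FiniteDimensional ℚ_[p] T]
    [Algebra ℤ_[p] T] [IsScalarTower ℤ_[p] ℚ_[p] T]
    (R : Subalgebra ℤ_[p] T) (hR : R = integralClosure ℤ_[p] T)
    (t θ : ↥R) (ht : Irreducible t) (hθ : IsUnit θ)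
    (d : ℕ) (hd : 1 < d) (hp : (p : ↥R) = t ^ d * θ)
    (η : Polynomial ↥R) (hη : Irreducible η) (hdvd : η ∣ Polynomial.cyclotomic p ↥R)
    (n : ℕ) (hn : n = η.natDegree) (hn1 : 1 < n)
    (j s : ℕ) (hj1 : 1 ≤ j) (hjd : j < d) (hs1 : 1 ≤ s) (hsn : s < n)
    (a : MonoidAlgebra ↥R (Multiplicative (ZMod p)))
    (ha : a = MonoidAlgebra.of ↥R (Multiplicative (ZMod p)) (Multiplicative.ofAdd 1))
    -- `ω = Φ_p(a) = 1 + a + ⋯ + a^(p-1)`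
    (ω : MonoidAlgebra ↥R (Multiplicative (ZMod p)))
    (hω : ω = ∑ g : Multiplicative (ZMod p), MonoidAlgebra.of ↥R (Multiplicative (ZMod p)) g)
    (μ : (MonoidAlgebra ↥R (Multiplicative (ZMod p)) × MonoidAlgebra ↥R (Multiplicative (ZMod p)))
      →ₗ[MonoidAlgebra ↥R (Multiplicative (ZMod p))] MonoidAlgebra ↥R (Multiplicative (ZMod p)))
    (hμ : μ = LinearMap.coprod
      ((algebraMap ↥R (MonoidAlgebra ↥R (Multiplicative (ZMod p))) (t ^ j) * (a - 1)) • LinearMap.id)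
      (((a - 1) ^ (s + 1)) • LinearMap.id))
    -- `u₃ = (t^{-j}(ω - (a-1)^{p-1}), (a-1)^{p-s-1})`: `t^{-j}(ω - (a-1)^{p-1})` is the
    -- (unique) element `u3x` of `RG` with `t^j·u3x = ω - (a-1)^{p-1}`
    (u3x : MonoidAlgebra ↥R (Multiplicative (ZMod p)))
    (hu3x : algebraMap ↥R (MonoidAlgebra ↥R (Multiplicative (ZMod p))) (t ^ j) * u3x =
      ω - (a - 1) ^ (p - 1)) :
    LinearMap.ker μ = Submodule.span (MonoidAlgebra ↥R (Multiplicative (ZMod p)))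
      {(0, ω), ((a - 1) ^ s, -(algebraMap ↥R (MonoidAlgebra ↥R (Multiplicative (ZMod p))) (t ^ j))),
        (u3x, (a - 1) ^ (p - s - 1))} := by
  have hprime : p.Prime := Fact.out
  have hp2 : 2 ≤ p := hprime.two_le
  have hnp : n ≤ p - 1 := by
    have h1 : η.natDegree ≤ (Polynomial.cyclotomic p ↥R).natDegree :=
      Polynomial.natDegree_le_of_dvd hdvd (Polynomial.cyclotomic_ne_zero p ↥R)
    rw [Polynomial.natDegree_cyclotomic, Nat.totient_prime hprime] at h1
    omega
  have hsp : s + 1 ≤ p - 1 := by omega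
  have htj : (t ^ j : ↥R) ≠ 0 := pow_ne_zero _ ht.ne_zero
  set TT := algebraMap ↥R (MonoidAlgebra ↥R (Multiplicative (ZMod p))) (t ^ j) with hTT
  -- basic identities
  have hEω : (a - 1) * ω = 0 := by
    have h1 : (a - 1) * ω = Polynomial.aeval a
        ((∑ i ∈ Finset.range p, (Polynomial.X : Polynomial ↥R) ^ i) * (Polynomial.X - 1)) := by
      rw [map_mul, map_sub, Polynomial.aeval_X, map_one, aux_omega a ha ω hω, mul_comm]
    rw [h1, geom_sum_mul, map_sub, map_pow, Polynomial.aeval_X, map_one,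
      aux_a_pow_p a ha, sub_self]
  have eA : (a - 1) ^ (s + 1) = (a - 1) * (a - 1) ^ s := pow_succ' (a - 1) s
  have eB : (a - 1) ^ s * (a - 1) ^ (p - s - 1) = (a - 1) ^ (p - 1) := by
    rw [← pow_add]; congr 1; omega
  have eD : (a - 1) * (a - 1) ^ (p - s - 1) = (a - 1) ^ (p - s) := by
    rw [← pow_succ']; congr 1; omega
  have eE : (a - 1) ^ s * (a - 1) ^ (p - s) = (a - 1) ^ p := by
    rw [← pow_add]; congr 1; omega
  have eF : (a - 1) ^ (s + 1) * (a - 1) ^ (p - s - 1) = (a - 1) ^ p := by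
    rw [← pow_add]; congr 1; omega
  have hEp : (a - 1) ^ p = -(TT * ((a - 1) * u3x)) := by
    have eC : (a - 1) * (a - 1) ^ (p - 1) = (a - 1) ^ p := by
      rw [← pow_succ']; congr 1; omega
    linear_combination (a - 1) * hu3x + hEω - eC
  apply le_antisymm
  · rintro ⟨x, y⟩ hz
    rw [LinearMap.mem_ker, hμ] at hz
    simp only [LinearMap.coprod_apply, LinearMap.smul_apply, LinearMap.id_coe, id_eq,
      smul_eq_mul] at hz
    -- hz : TT * (a-1) * x + (a-1)^(s+1) * y = 0
    have h1 : (a - 1) * (TT * x + (a - 1) ^ s * y) = 0 := by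
      linear_combination hz - y * eA
    obtain ⟨c, hc⟩ := aux_ann a ha ω hω _ h1
    have h2 : (a - 1) ^ s * (y - (a - 1) ^ (p - s - 1) * c) = TT * (-(x - u3x * c)) := by
      linear_combination hc - c * hu3x - c * eB
    have hT0dvd : (t ^ j : ↥R) ∣ ((p : ℕ) : ↥R) := by
      refine ⟨t ^ (d - j) * θ, ?_⟩
      rw [hp, ← mul_assoc, ← pow_add]
      have hdj : j + (d - j) = d := by omega
      rw [hdj]
    obtain ⟨q, r, hqr⟩ := aux_key a ha (t ^ j) hT0dvd s (by omega) _ _ h2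
    have h3 : TT * (-(x - u3x * c)) = TT * ((a - 1) ^ s * r - (a - 1) * u3x * q) := by
      linear_combination (-1 : MonoidAlgebra ↥R (Multiplicative (ZMod p))) * h2 +
        (a - 1) ^ s * hqr + q * eE + q * hEp
    have h4 : -(x - u3x * c) = (a - 1) ^ s * r - (a - 1) * u3x * q :=
      aux_cancel (t ^ j) htj h3
    have hx' : x = (c + (a - 1) * q) * u3x + (-r) * (a - 1) ^ s := by
      linear_combination -h4
    have hy' : y = (c + (a - 1) * q) * (a - 1) ^ (p - s - 1) + (-r) * (-TT) := by
      linear_combination hqr - q * eD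
    have hfin : ((x, y) : MonoidAlgebra ↥R (Multiplicative (ZMod p)) ×
        MonoidAlgebra ↥R (Multiplicative (ZMod p))) =
        (c + (a - 1) * q) • (u3x, (a - 1) ^ (p - s - 1)) + (-r) • ((a - 1) ^ s, -TT) := by
      refine Prod.ext_iff.mpr ⟨?_, ?_⟩
      · simpa [smul_eq_mul] using hx'
      · simpa [smul_eq_mul] using hy'
    rw [hfin]
    exact Submodule.add_mem _
      (Submodule.smul_mem _ _ (Submodule.subset_span (by simp)))
      (Submodule.smul_mem _ _ (Submodule.subset_span (by simp)))
  · rw [Submodule.span_le]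
    rintro z hzset
    simp only [Set.mem_insert_iff, Set.mem_singleton_iff] at hzset
    rw [SetLike.mem_coe, LinearMap.mem_ker, hμ]
    rcases hzset with h | h | h <;> subst h <;>
      simp only [LinearMap.coprod_apply, LinearMap.smul_apply, LinearMap.id_coe, id_eq,
        smul_eq_mul]
    · linear_combination ω * eA + (a - 1) ^ s * hEω
    · linear_combination (-TT) * eA
    · linear_combination hEp + eF
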